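/- Let T > 0 and let v_k : [0,T) → [0,∞), for integers k ≥ 1, be differentiable functions satisfying the Smoluchowski coagulation equations v_k'(t) = −k v_k(t) + (k/2) ∑_{l=1}^{k-1} v_l(t) v_{k-l}(t) for all k ≥ 1 and t ∈ [0,T), such that ∑_{k ≥ 1} v_k(t) = 1 for all t ∈ [0,T), the mean E(t) = ∑_{k ≥ 1} k · v_k(t) is finite for all t ∈ [0,T), and E(0) = 1/T. Then E(t) = 1/(T − t) for all t ∈ [0,T). -/

import Mathlib

lemma tri_reindex (N : ℕ) (F : ℕ → ℕ → ℝ) :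
    ∑ k ∈ Finset.Icc 1 N, ∑ l ∈ Finset.Ico 1 k, F l (k - l)
      = ∑ l ∈ Finset.Icc 1 N, ∑ m ∈ Finset.Icc 1 (N - l), F l m := by
  rw [Finset.sum_sigma' (Finset.Icc 1 N) (fun k => Finset.Ico 1 k) (fun k l => F l (k - l)),
    Finset.sum_sigma' (Finset.Icc 1 N) (fun l => Finset.Icc 1 (N - l)) (fun l m => F l m)]
  refine Finset.sum_nbij' (fun p => ⟨p.2, p.1 - p.2⟩) (fun q => ⟨q.1 + q.2, q.1⟩) ?_ ?_ ?_ ?_ ?_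
  · rintro ⟨k, l⟩ h
    simp only [Finset.mem_sigma, Finset.mem_Icc, Finset.mem_Ico] at h ⊢
    omega
  · rintro ⟨l, m⟩ h
    simp only [Finset.mem_sigma, Finset.mem_Icc, Finset.mem_Ico] at h ⊢
    omega
  · rintro ⟨k, l⟩ h
    simp only [Finset.mem_sigma, Finset.mem_Icc, Finset.mem_Ico] at h
    simp only [Sigma.mk.inj_iff]
    constructor
    · omega
    · exact heq_of_eq (by omega)
  · rintro ⟨l, m⟩ h
    simp only [Finset.mem_sigma, Finset.mem_Icc, Finset.mem_Ico] at h
    simp only [Sigma.mk.inj_iff]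
    refine ⟨trivial, heq_of_eq (by omega)⟩
  · rintro ⟨k, l⟩ h
    rfl

lemma tri_symm (N : ℕ) (F : ℕ → ℕ → ℝ) :
    ∑ l ∈ Finset.Icc 1 N, ∑ m ∈ Finset.Icc 1 (N - l), F l m
      = ∑ l ∈ Finset.Icc 1 N, ∑ m ∈ Finset.Icc 1 (N - l), F m l := by
  rw [Finset.sum_sigma' (Finset.Icc 1 N) (fun l => Finset.Icc 1 (N - l)) (fun l m => F l m),
    Finset.sum_sigma' (Finset.Icc 1 N) (fun l => Finset.Icc 1 (N - l)) (fun l m => F m l)]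
  refine Finset.sum_nbij' (fun p => ⟨p.2, p.1⟩) (fun p => ⟨p.2, p.1⟩) ?_ ?_ ?_ ?_ ?_ <;>
    rintro ⟨l, m⟩ h <;>
    simp only [Finset.mem_sigma, Finset.mem_Icc] at h ⊢ <;>
    first | omega | exact ⟨rfl, HEq.rfl⟩ | rfl

lemma gain_reindex (a g : ℕ → ℝ) (N : ℕ) :
    ∑ k ∈ Finset.Icc 1 N, g k * ∑ l ∈ Finset.Ico 1 k, a l * a (k - l)
      = ∑ l ∈ Finset.Icc 1 N, ∑ m ∈ Finset.Icc 1 (N - l), g (l + m) * (a l * a m) := by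
  rw [← tri_reindex N (fun l m => g (l + m) * (a l * a m))]
  refine Finset.sum_congr rfl fun k hk => ?_
  rw [Finset.mul_sum]
  refine Finset.sum_congr rfl fun l hl => ?_
  simp only [Finset.mem_Ico] at hl
  have h2 : l + (k - l) = k := by omega
  simp only [h2]

lemma DN_eq (a : ℕ → ℝ) (N : ℕ) :
    ∑ k ∈ Finset.Icc 1 N, (k : ℝ) * (-(k : ℝ) * a k + (k : ℝ) / 2 * ∑ l ∈ Finset.Ico 1 k, a l * a (k - l))
      = (∑ l ∈ Finset.Icc 1 N, ∑ m ∈ Finset.Icc 1 (N - l), (l : ℝ) * (m : ℝ) * (a l * a m))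
        - ∑ l ∈ Finset.Icc 1 N, (l : ℝ) ^ 2 * a l * (1 - ∑ m ∈ Finset.Icc 1 (N - l), a m) := by
  have expand : ∀ k ∈ Finset.Icc 1 N,
      (k : ℝ) * (-(k : ℝ) * a k + (k : ℝ) / 2 * ∑ l ∈ Finset.Ico 1 k, a l * a (k - l))
        = -((k : ℝ) ^ 2 * a k) + ((k : ℝ) ^ 2 / 2) * ∑ l ∈ Finset.Ico 1 k, a l * a (k - l) := by
    intro k hk; ring
  rw [Finset.sum_congr rfl expand, Finset.sum_add_distrib, Finset.sum_neg_distrib,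
    gain_reindex a (fun k => (k : ℝ) ^ 2 / 2) N]
  have split : ∀ l ∈ Finset.Icc 1 N, ∀ m ∈ Finset.Icc 1 (N - l),
      ((l + m : ℕ) : ℝ) ^ 2 / 2 * (a l * a m)
        = (l : ℝ) * (m : ℝ) * (a l * a m) + (l : ℝ) ^ 2 / 2 * (a l * a m)
          + (m : ℝ) ^ 2 / 2 * (a l * a m) := by
    intro l _ m _; push_cast; ring
  rw [Finset.sum_congr rfl fun l hl => Finset.sum_congr rfl fun m hm => split l hl m hm]
  simp only [Finset.sum_add_distrib]
  have hsymm : ∑ l ∈ Finset.Icc 1 N, ∑ m ∈ Finset.Icc 1 (N - l), (m : ℝ) ^ 2 / 2 * (a l * a m)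
      = ∑ l ∈ Finset.Icc 1 N, ∑ m ∈ Finset.Icc 1 (N - l), (l : ℝ) ^ 2 / 2 * (a l * a m) := by
    rw [tri_symm N (fun l m => (m : ℝ) ^ 2 / 2 * (a l * a m))]
    exact Finset.sum_congr rfl fun l _ => Finset.sum_congr rfl fun m _ => by ring
  rw [hsymm]
  have hBC : ∑ l ∈ Finset.Icc 1 N, (l : ℝ) ^ 2 * a l * (1 - ∑ m ∈ Finset.Icc 1 (N - l), a m)
      = (∑ k ∈ Finset.Icc 1 N, (k : ℝ) ^ 2 * a k)
        - (∑ l ∈ Finset.Icc 1 N, ∑ m ∈ Finset.Icc 1 (N - l), (l : ℝ) ^ 2 / 2 * (a l * a m))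
        - (∑ l ∈ Finset.Icc 1 N, ∑ m ∈ Finset.Icc 1 (N - l), (l : ℝ) ^ 2 / 2 * (a l * a m)) := by
    rw [← Finset.sum_sub_distrib, ← Finset.sum_sub_distrib]
    refine Finset.sum_congr rfl fun l _ => ?_
    have hc : ∑ m ∈ Finset.Icc 1 (N - l), (l : ℝ) ^ 2 / 2 * (a l * a m)
        = (l : ℝ) ^ 2 / 2 * a l * ∑ m ∈ Finset.Icc 1 (N - l), a m := by
      rw [Finset.mul_sum]
      exact Finset.sum_congr rfl fun m _ => by ring
    rw [hc]; ring
  rw [hBC]; ring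

lemma CN_eq (a : ℕ → ℝ) (N : ℕ) :
    ∑ k ∈ Finset.Icc 1 N, (-(k : ℝ) * a k + (k : ℝ) / 2 * ∑ l ∈ Finset.Ico 1 k, a l * a (k - l))
      = - ∑ l ∈ Finset.Icc 1 N, (l : ℝ) * a l * (1 - ∑ m ∈ Finset.Icc 1 (N - l), a m) := by
  rw [Finset.sum_add_distrib, gain_reindex a (fun k => (k : ℝ) / 2) N]
  have hneg : ∑ x ∈ Finset.Icc 1 N, -(x : ℝ) * a x = -∑ x ∈ Finset.Icc 1 N, (x : ℝ) * a x := by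
    rw [← Finset.sum_neg_distrib]
    exact Finset.sum_congr rfl fun x _ => by ring
  rw [hneg]
  have split : ∀ l ∈ Finset.Icc 1 N, ∀ m ∈ Finset.Icc 1 (N - l),
      ((l + m : ℕ) : ℝ) / 2 * (a l * a m)
        = (l : ℝ) / 2 * (a l * a m) + (m : ℝ) / 2 * (a l * a m) := by
    intro l _ m _; push_cast; ring
  rw [Finset.sum_congr rfl fun l hl => Finset.sum_congr rfl fun m hm => split l hl m hm]
  simp only [Finset.sum_add_distrib]
  have hsymm : ∑ l ∈ Finset.Icc 1 N, ∑ m ∈ Finset.Icc 1 (N - l), (m : ℝ) / 2 * (a l * a m)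
      = ∑ l ∈ Finset.Icc 1 N, ∑ m ∈ Finset.Icc 1 (N - l), (l : ℝ) / 2 * (a l * a m) := by
    rw [tri_symm N (fun l m => (m : ℝ) / 2 * (a l * a m))]
    exact Finset.sum_congr rfl fun l _ => Finset.sum_congr rfl fun m _ => by ring
  rw [hsymm]
  have hBC : ∑ l ∈ Finset.Icc 1 N, (l : ℝ) * a l * (1 - ∑ m ∈ Finset.Icc 1 (N - l), a m)
      = (∑ k ∈ Finset.Icc 1 N, (k : ℝ) * a k)
        - (∑ l ∈ Finset.Icc 1 N, ∑ m ∈ Finset.Icc 1 (N - l), (l : ℝ) / 2 * (a l * a m))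
        - (∑ l ∈ Finset.Icc 1 N, ∑ m ∈ Finset.Icc 1 (N - l), (l : ℝ) / 2 * (a l * a m)) := by
    rw [← Finset.sum_sub_distrib, ← Finset.sum_sub_distrib]
    refine Finset.sum_congr rfl fun l _ => ?_
    have hc : ∑ m ∈ Finset.Icc 1 (N - l), (l : ℝ) / 2 * (a l * a m)
        = (l : ℝ) / 2 * a l * ∑ m ∈ Finset.Icc 1 (N - l), a m := by
      rw [Finset.mul_sum]
      exact Finset.sum_congr rfl fun m _ => by ring
    rw [hc]; ring
  rw [hBC]; ring

open Set Finset MeasureTheory intervalIntegral Filter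

noncomputable def enn (v : ℕ → ℝ → ℝ) (N : ℕ) (t : ℝ) : ℝ :=
  ∑ k ∈ Finset.Icc 1 N, (k : ℝ) * v k t

noncomputable def dnn (v : ℕ → ℝ → ℝ) (N : ℕ) (t : ℝ) : ℝ :=
  ∑ k ∈ Finset.Icc 1 N, (k : ℝ) *
    (-(k : ℝ) * v k t + (k : ℝ) / 2 * ∑ l ∈ Finset.Ico 1 k, v l t * v (k - l) t)

noncomputable def pnn (v : ℕ → ℝ → ℝ) (N : ℕ) (t : ℝ) : ℝ :=
  ∑ l ∈ Finset.Icc 1 N, ∑ m ∈ Finset.Icc 1 (N - l), (l : ℝ) * (m : ℝ) * (v l t * v m t)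

noncomputable def mnn (v : ℕ → ℝ → ℝ) (N : ℕ) (t : ℝ) : ℝ :=
  ∑ k ∈ Finset.Icc 1 N, v k t

noncomputable def rnn (v : ℕ → ℝ → ℝ) (N : ℕ) (t : ℝ) : ℝ :=
  ∑ l ∈ Finset.Icc 1 N, (l : ℝ) * v l t * (1 - mnn v (N - l) t)

noncomputable def Rnn (v : ℕ → ℝ → ℝ) (N : ℕ) (t : ℝ) : ℝ :=
  ∑ l ∈ Finset.Icc 1 N, (l : ℝ) ^ 2 * v l t * (1 - mnn v (N - l) t)

noncomputable def Ev (v : ℕ → ℝ → ℝ) (t : ℝ) : ℝ :=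
  ∑' k : ℕ, ((k : ℝ) + 1) * v (k + 1) t

-- DN = PN - RN (pure algebra)
lemma dnn_eq (v : ℕ → ℝ → ℝ) (N : ℕ) (t : ℝ) :
    dnn v N t = pnn v N t - Rnn v N t := by
  simpa [dnn, pnn, Rnn, mnn] using DN_eq (fun k => v k t) N

lemma sum_Icc_shift (f : ℕ → ℝ) (N : ℕ) :
    ∑ k ∈ Finset.Icc 1 N, f k = ∑ i ∈ Finset.range N, f (i + 1) := by
  rw [← Finset.Ico_add_one_right_eq_Icc, Finset.sum_Ico_eq_sum_range]
  simp [Nat.add_comm]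

lemma enn_eq_range (v : ℕ → ℝ → ℝ) (N : ℕ) (t : ℝ) :
    enn v N t = ∑ i ∈ Finset.range N, ((i : ℝ) + 1) * v (i + 1) t := by
  rw [enn, sum_Icc_shift (fun k => (k : ℝ) * v k t) N]
  refine Finset.sum_congr rfl fun i _ => ?_
  push_cast
  ring

lemma mnn_eq_range (v : ℕ → ℝ → ℝ) (N : ℕ) (t : ℝ) :
    mnn v N t = ∑ i ∈ Finset.range N, v (i + 1) t := by
  exact sum_Icc_shift (fun k => v k t) N

lemma DN_le (a : ℕ → ℝ) (N : ℕ) (h0 : ∀ k, 1 ≤ k → 0 ≤ a k)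
    (hc : ∀ j, (∑ m ∈ Finset.Icc 1 j, a m) ≤ 1) :
    ∑ k ∈ Finset.Icc 1 N, (k : ℝ) *
        (-(k : ℝ) * a k + (k : ℝ) / 2 * ∑ l ∈ Finset.Ico 1 k, a l * a (k - l))
      ≤ (∑ k ∈ Finset.Icc 1 N, (k : ℝ) * a k) ^ 2 := by
  rw [DN_eq]
  have hR : 0 ≤ ∑ l ∈ Finset.Icc 1 N, (l : ℝ) ^ 2 * a l * (1 - ∑ m ∈ Finset.Icc 1 (N - l), a m) := by
    refine Finset.sum_nonneg fun l hl => ?_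
    simp only [Finset.mem_Icc] at hl
    have h1 := h0 l hl.1
    have h2 := hc (N - l)
    have h3 : (0:ℝ) ≤ (l : ℝ) ^ 2 * a l := by positivity
    have h4 : (0:ℝ) ≤ 1 - ∑ m ∈ Finset.Icc 1 (N - l), a m := by linarith
    exact mul_nonneg h3 h4
  have hP : ∑ l ∈ Finset.Icc 1 N, ∑ m ∈ Finset.Icc 1 (N - l), (l : ℝ) * (m : ℝ) * (a l * a m)
      ≤ (∑ k ∈ Finset.Icc 1 N, (k : ℝ) * a k) ^ 2 := by
    have step1 : ∑ l ∈ Finset.Icc 1 N, ∑ m ∈ Finset.Icc 1 (N - l), (l : ℝ) * (m : ℝ) * (a l * a m)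
        ≤ ∑ l ∈ Finset.Icc 1 N, ∑ m ∈ Finset.Icc 1 N, (l : ℝ) * (m : ℝ) * (a l * a m) := by
      refine Finset.sum_le_sum fun l hl => ?_
      refine Finset.sum_le_sum_of_subset_of_nonneg
        (Finset.Icc_subset_Icc_right (Nat.sub_le N l)) fun m hm _ => ?_
      simp only [Finset.mem_Icc] at hl hm
      have := h0 l hl.1
      have := h0 m hm.1
      positivity
    have step2 : ∑ l ∈ Finset.Icc 1 N, ∑ m ∈ Finset.Icc 1 N, (l : ℝ) * (m : ℝ) * (a l * a m)
        = (∑ k ∈ Finset.Icc 1 N, (k : ℝ) * a k) ^ 2 := by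
      rw [sq, Finset.sum_mul_sum]
      exact Finset.sum_congr rfl fun l _ => Finset.sum_congr rfl fun m _ => by ring
    linarith
  linarith

section Main

variable {T : ℝ} {v : ℕ → ℝ → ℝ}

lemma cont_v (hderiv : ∀ k : ℕ, 1 ≤ k → ∀ t ∈ Set.Ico (0 : ℝ) T,
      HasDerivWithinAt (v k)
        (-(k : ℝ) * v k t + (k : ℝ) / 2 * ∑ l ∈ Finset.Ico 1 k, v l t * v (k - l) t)
        (Set.Ico 0 T) t) (k : ℕ) (hk : 1 ≤ k) : ContinuousOn (v k) (Set.Ico 0 T) :=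
  fun t ht => (hderiv k hk t ht).continuousWithinAt

lemma enn_hasDeriv (hderiv : ∀ k : ℕ, 1 ≤ k → ∀ t ∈ Set.Ico (0 : ℝ) T,
      HasDerivWithinAt (v k)
        (-(k : ℝ) * v k t + (k : ℝ) / 2 * ∑ l ∈ Finset.Ico 1 k, v l t * v (k - l) t)
        (Set.Ico 0 T) t) (N : ℕ) {t : ℝ} (ht : t ∈ Set.Ico (0 : ℝ) T) :
    HasDerivWithinAt (enn v N) (dnn v N t) (Set.Ico 0 T) t := by
  refine HasDerivWithinAt.fun_sum fun k hk => ?_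
  simp only [Finset.mem_Icc] at hk
  exact (hderiv k hk.1 t ht).const_mul ((k : ℝ))

lemma mnn_hasDeriv (hderiv : ∀ k : ℕ, 1 ≤ k → ∀ t ∈ Set.Ico (0 : ℝ) T,
      HasDerivWithinAt (v k)
        (-(k : ℝ) * v k t + (k : ℝ) / 2 * ∑ l ∈ Finset.Ico 1 k, v l t * v (k - l) t)
        (Set.Ico 0 T) t) (N : ℕ) {t : ℝ} (ht : t ∈ Set.Ico (0 : ℝ) T) :
    HasDerivWithinAt (mnn v N) (-(rnn v N t)) (Set.Ico 0 T) t := by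
  have h := HasDerivWithinAt.fun_sum (u := Finset.Icc 1 N)
    (A := fun k s => v k s)
    (A' := fun k => -(k : ℝ) * v k t + (k : ℝ) / 2 * ∑ l ∈ Finset.Ico 1 k, v l t * v (k - l) t)
    (fun k hk => hderiv k (Finset.mem_Icc.mp hk).1 t ht)
  have : (∑ k ∈ Finset.Icc 1 N,
      (-(k : ℝ) * v k t + (k : ℝ) / 2 * ∑ l ∈ Finset.Ico 1 k, v l t * v (k - l) t))
      = -(rnn v N t) := by
    simpa [rnn, mnn] using CN_eq (fun k => v k t) N
  rw [this] at h
  exact h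

end Main

section Main2

variable {T : ℝ} {v : ℕ → ℝ → ℝ}

lemma mnn_le_one (hnn : ∀ k : ℕ, 1 ≤ k → ∀ t ∈ Set.Ico (0 : ℝ) T, 0 ≤ v k t)
    (hsum : ∀ t ∈ Set.Ico (0 : ℝ) T, HasSum (fun k : ℕ => v (k + 1) t) 1)
    {t : ℝ} (ht : t ∈ Set.Ico (0 : ℝ) T) (N : ℕ) : mnn v N t ≤ 1 := by
  rw [mnn_eq_range]
  exact sum_le_hasSum (Finset.range N) (fun i _ => hnn (i + 1) (Nat.succ_le_succ (Nat.zero_le i)) t ht)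
    (hsum t ht)

lemma mnn_nonneg (hnn : ∀ k : ℕ, 1 ≤ k → ∀ t ∈ Set.Ico (0 : ℝ) T, 0 ≤ v k t)
    {t : ℝ} (ht : t ∈ Set.Ico (0 : ℝ) T) (N : ℕ) : 0 ≤ mnn v N t :=
  Finset.sum_nonneg fun k hk => hnn k (Finset.mem_Icc.mp hk).1 t ht

lemma enn_nonneg (hnn : ∀ k : ℕ, 1 ≤ k → ∀ t ∈ Set.Ico (0 : ℝ) T, 0 ≤ v k t)
    {t : ℝ} (ht : t ∈ Set.Ico (0 : ℝ) T) (N : ℕ) : 0 ≤ enn v N t :=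
  Finset.sum_nonneg fun k hk =>
    mul_nonneg (Nat.cast_nonneg k) (hnn k (Finset.mem_Icc.mp hk).1 t ht)

lemma enn_le_Ev (hnn : ∀ k : ℕ, 1 ≤ k → ∀ t ∈ Set.Ico (0 : ℝ) T, 0 ≤ v k t)
    (hmean : ∀ t ∈ Set.Ico (0 : ℝ) T, Summable (fun k : ℕ => ((k : ℝ) + 1) * v (k + 1) t))
    {t : ℝ} (ht : t ∈ Set.Ico (0 : ℝ) T) (N : ℕ) : enn v N t ≤ Ev v t := by
  rw [enn_eq_range]
  exact Summable.sum_le_tsum (Finset.range N)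
    (fun i _ => mul_nonneg (by positivity) (hnn (i + 1) (Nat.succ_le_succ (Nat.zero_le i)) t ht))
    (hmean t ht)

lemma Ev_nonneg (hnn : ∀ k : ℕ, 1 ≤ k → ∀ t ∈ Set.Ico (0 : ℝ) T, 0 ≤ v k t)
    {t : ℝ} (ht : t ∈ Set.Ico (0 : ℝ) T) : 0 ≤ Ev v t :=
  tsum_nonneg fun i =>
    mul_nonneg (by positivity) (hnn (i + 1) (Nat.succ_le_succ (Nat.zero_le i)) t ht)

lemma enn_tendsto (hmean : ∀ t ∈ Set.Ico (0 : ℝ) T, Summable (fun k : ℕ => ((k : ℝ) + 1) * v (k + 1) t))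
    {t : ℝ} (ht : t ∈ Set.Ico (0 : ℝ) T) :
    Filter.Tendsto (fun N => enn v N t) Filter.atTop (nhds (Ev v t)) := by
  have h := ((hmean t ht).hasSum).tendsto_sum_nat
  simpa only [← enn_eq_range, Ev] using h

lemma dnn_le_sq (hnn : ∀ k : ℕ, 1 ≤ k → ∀ t ∈ Set.Ico (0 : ℝ) T, 0 ≤ v k t)
    (hsum : ∀ t ∈ Set.Ico (0 : ℝ) T, HasSum (fun k : ℕ => v (k + 1) t) 1)
    {t : ℝ} (ht : t ∈ Set.Ico (0 : ℝ) T) (N : ℕ) : dnn v N t ≤ (enn v N t) ^ 2 :=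
  DN_le (fun k => v k t) N (fun k hk => hnn k hk t ht)
    (fun j => mnn_le_one hnn hsum ht j)

lemma enn_contOn (hderiv : ∀ k : ℕ, 1 ≤ k → ∀ t ∈ Set.Ico (0 : ℝ) T,
      HasDerivWithinAt (v k)
        (-(k : ℝ) * v k t + (k : ℝ) / 2 * ∑ l ∈ Finset.Ico 1 k, v l t * v (k - l) t)
        (Set.Ico 0 T) t) (N : ℕ) : ContinuousOn (enn v N) (Set.Ico 0 T) :=
  fun t ht => ((enn_hasDeriv hderiv N ht).continuousWithinAt)

lemma mnn_contOn (hderiv : ∀ k : ℕ, 1 ≤ k → ∀ t ∈ Set.Ico (0 : ℝ) T,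
      HasDerivWithinAt (v k)
        (-(k : ℝ) * v k t + (k : ℝ) / 2 * ∑ l ∈ Finset.Ico 1 k, v l t * v (k - l) t)
        (Set.Ico 0 T) t) (N : ℕ) : ContinuousOn (mnn v N) (Set.Ico 0 T) :=
  fun t ht => ((mnn_hasDeriv hderiv N ht).continuousWithinAt)

end Main2
section Main3

variable {T : ℝ} {v : ℕ → ℝ → ℝ}

lemma enn_riccati_bound (hT : 0 < T)
    (hnn : ∀ k : ℕ, 1 ≤ k → ∀ t ∈ Set.Ico (0 : ℝ) T, 0 ≤ v k t)
    (hderiv : ∀ k : ℕ, 1 ≤ k → ∀ t ∈ Set.Ico (0 : ℝ) T,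
      HasDerivWithinAt (v k)
        (-(k : ℝ) * v k t + (k : ℝ) / 2 * ∑ l ∈ Finset.Ico 1 k, v l t * v (k - l) t)
        (Set.Ico 0 T) t)
    (hsum : ∀ t ∈ Set.Ico (0 : ℝ) T, HasSum (fun k : ℕ => v (k + 1) t) 1)
    (hmean : ∀ t ∈ Set.Ico (0 : ℝ) T, Summable (fun k : ℕ => ((k : ℝ) + 1) * v (k + 1) t))
    (hE0 : Ev v 0 = 1 / T)
    {t : ℝ} (ht : t ∈ Set.Ico (0 : ℝ) T) (N : ℕ) : enn v N t ≤ (T - t)⁻¹ := by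
  have h0T : (0 : ℝ) ∈ Set.Ico (0 : ℝ) T := ⟨le_refl 0, hT⟩
  have henn0 : enn v N 0 ≤ T⁻¹ := by
    have := enn_le_Ev hnn hmean h0T N
    rw [hE0, one_div] at this
    exact this
  rcases eq_or_lt_of_le ht.1 with h0 | h0
  · rw [← h0, sub_zero]
    exact le_trans henn0 (by norm_num)
  -- 0 < t
  have htT := ht.2
  have htinv : T⁻¹ < t⁻¹ := by
    exact inv_strictAnti₀ h0 htT
  -- main claim for small δ
  have claim : ∀ δ ∈ Set.Ioo (0 : ℝ) (t⁻¹ - T⁻¹), enn v N t ≤ ((T⁻¹ + δ)⁻¹ - t)⁻¹ - δ := by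
    intro δ hδ
    obtain ⟨hδ0, hδlt⟩ := hδ
    have hcpos : 0 < T⁻¹ + δ := by positivity
    have hbpos : 0 < (T⁻¹ + δ)⁻¹ - t := by
      have h1 : T⁻¹ + δ < t⁻¹ := by linarith
      have := inv_strictAnti₀ hcpos h1
      rw [inv_inv] at this
      linarith
    -- monotone function g
    set g : ℝ → ℝ := fun u => (enn v N u + δ)⁻¹ + u with hg
    have hIccsub : Set.Icc (0 : ℝ) t ⊆ Set.Ico 0 T := fun x hx => ⟨hx.1, lt_of_le_of_lt hx.2 htT⟩
    have hne : ∀ x ∈ Set.Ico (0:ℝ) T, enn v N x + δ ≠ 0 := fun x hx =>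
      ne_of_gt (by have := enn_nonneg hnn hx N; linarith)
    have hgc : ContinuousOn g (Set.Icc 0 t) := by
      apply ContinuousOn.add
      · exact ContinuousOn.inv₀ (((enn_contOn hderiv N).mono hIccsub).add continuousOn_const)
          (fun x hx => hne x (hIccsub hx))
      · exact continuousOn_id
    have hgd : ∀ x ∈ Set.Ioo (0:ℝ) t, HasDerivAt g (-(dnn v N x) / (enn v N x + δ) ^ 2 + 1) x := by
      intro x hx
      have hxI : x ∈ Set.Ico (0:ℝ) T := ⟨le_of_lt hx.1, lt_trans hx.2 htT⟩
      have hd : HasDerivAt (enn v N) (dnn v N x) x :=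
        (enn_hasDeriv hderiv N hxI).hasDerivAt (Ico_mem_nhds hx.1 (lt_trans hx.2 htT))
      have h1 : HasDerivAt (fun u => (enn v N u + δ)⁻¹) (-(dnn v N x) / (enn v N x + δ) ^ 2) x := by
        have := ((hd.add_const δ).inv (hne x hxI))
        exact this
      exact h1.add (hasDerivAt_id x)
    have hmono : MonotoneOn g (Set.Icc 0 t) := by
      apply monotoneOn_of_deriv_nonneg (convex_Icc 0 t) hgc
      · intro x hx
        rw [interior_Icc] at hx
        exact (hgd x hx).differentiableAt.differentiableWithinAt
      · intro x hx
        rw [interior_Icc] at hx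
        rw [(hgd x hx).deriv]
        have hxI : x ∈ Set.Ico (0:ℝ) T := ⟨le_of_lt hx.1, lt_trans hx.2 htT⟩
        have hdle : dnn v N x ≤ (enn v N x) ^ 2 := dnn_le_sq hnn hsum hxI N
        have hennn : 0 ≤ enn v N x := enn_nonneg hnn hxI N
        have hq : 0 < (enn v N x + δ) ^ 2 := by positivity
        have h2 : dnn v N x ≤ (enn v N x + δ) ^ 2 := by nlinarith
        have h3 : dnn v N x / (enn v N x + δ) ^ 2 ≤ 1 := (div_le_one hq).mpr h2
        have h4 : -(dnn v N x) / (enn v N x + δ) ^ 2 = -(dnn v N x / (enn v N x + δ) ^ 2) := by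
          ring
        rw [h4]; linarith
    have hg0 : g 0 ≤ g t := hmono (Set.left_mem_Icc.mpr (le_of_lt h0))
      (Set.right_mem_Icc.mpr (le_of_lt h0)) (le_of_lt h0)
    -- unfold
    have hA : (T⁻¹ + δ)⁻¹ ≤ (enn v N 0 + δ)⁻¹ :=
      inv_anti₀ (by have := enn_nonneg hnn h0T N; linarith) (by linarith)
    have hB : (T⁻¹ + δ)⁻¹ - t ≤ (enn v N t + δ)⁻¹ := by
      have : (enn v N 0 + δ)⁻¹ + 0 ≤ (enn v N t + δ)⁻¹ + t := hg0
      linarith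
    have hpos : 0 < enn v N t + δ := by
      have := enn_nonneg hnn ht N; linarith
    have := inv_anti₀ hbpos hB
    rw [inv_inv] at this
    linarith
  -- take δ → 0⁺
  have hlim : Filter.Tendsto (fun δ : ℝ => ((T⁻¹ + δ)⁻¹ - t)⁻¹ - δ)
      (nhdsWithin 0 (Set.Ioi 0)) (nhds ((T - t)⁻¹)) := by
    have h1 : Filter.Tendsto (fun δ : ℝ => ((T⁻¹ + δ)⁻¹ - t)⁻¹ - δ) (nhds 0)
        (nhds (((T⁻¹ + 0)⁻¹ - t)⁻¹ - 0)) := by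
      apply Filter.Tendsto.sub ?_ tendsto_id
      apply Filter.Tendsto.inv₀
      · exact (((tendsto_const_nhds).add tendsto_id).inv₀ (by positivity)).sub tendsto_const_nhds
      · rw [add_zero, inv_inv]
        exact ne_of_gt (by linarith)
    rw [add_zero, inv_inv, sub_zero] at h1
    exact h1.mono_left nhdsWithin_le_nhds
  refine ge_of_tendsto hlim ?_
  filter_upwards [Ioo_mem_nhdsGT_of_mem (show (0:ℝ) ∈ Set.Ico (0:ℝ) (t⁻¹ - T⁻¹) from ⟨le_refl 0, by linarith⟩)] with δ hδ
  exact claim δ hδ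

lemma Ev_le (hT : 0 < T)
    (hnn : ∀ k : ℕ, 1 ≤ k → ∀ t ∈ Set.Ico (0 : ℝ) T, 0 ≤ v k t)
    (hderiv : ∀ k : ℕ, 1 ≤ k → ∀ t ∈ Set.Ico (0 : ℝ) T,
      HasDerivWithinAt (v k)
        (-(k : ℝ) * v k t + (k : ℝ) / 2 * ∑ l ∈ Finset.Ico 1 k, v l t * v (k - l) t)
        (Set.Ico 0 T) t)
    (hsum : ∀ t ∈ Set.Ico (0 : ℝ) T, HasSum (fun k : ℕ => v (k + 1) t) 1)
    (hmean : ∀ t ∈ Set.Ico (0 : ℝ) T, Summable (fun k : ℕ => ((k : ℝ) + 1) * v (k + 1) t))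
    (hE0 : Ev v 0 = 1 / T)
    {t : ℝ} (ht : t ∈ Set.Ico (0 : ℝ) T) : Ev v t ≤ (T - t)⁻¹ :=
  le_of_tendsto (enn_tendsto hmean ht)
    (Filter.Eventually.of_forall fun N => enn_riccati_bound hT hnn hderiv hsum hmean hE0 ht N)

end Main3
-- Algebra: pnn bounds
lemma PN_le (a : ℕ → ℝ) (N : ℕ) (h0 : ∀ k, 1 ≤ k → 0 ≤ a k) :
    ∑ l ∈ Finset.Icc 1 N, ∑ m ∈ Finset.Icc 1 (N - l), (l : ℝ) * (m : ℝ) * (a l * a m)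
      ≤ (∑ k ∈ Finset.Icc 1 N, (k : ℝ) * a k) ^ 2 := by
  have step1 : ∑ l ∈ Finset.Icc 1 N, ∑ m ∈ Finset.Icc 1 (N - l), (l : ℝ) * (m : ℝ) * (a l * a m)
      ≤ ∑ l ∈ Finset.Icc 1 N, ∑ m ∈ Finset.Icc 1 N, (l : ℝ) * (m : ℝ) * (a l * a m) := by
    refine Finset.sum_le_sum fun l hl => ?_
    refine Finset.sum_le_sum_of_subset_of_nonneg
      (Finset.Icc_subset_Icc_right (Nat.sub_le N l)) fun m hm _ => ?_
    simp only [Finset.mem_Icc] at hl hm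
    have := h0 l hl.1
    have := h0 m hm.1
    positivity
  have step2 : ∑ l ∈ Finset.Icc 1 N, ∑ m ∈ Finset.Icc 1 N, (l : ℝ) * (m : ℝ) * (a l * a m)
      = (∑ k ∈ Finset.Icc 1 N, (k : ℝ) * a k) ^ 2 := by
    rw [sq, Finset.sum_mul_sum]
    exact Finset.sum_congr rfl fun l _ => Finset.sum_congr rfl fun m _ => by ring
  linarith

lemma PN_ge (a : ℕ → ℝ) (N M : ℕ) (h0 : ∀ k, 1 ≤ k → 0 ≤ a k) (hMN : M + M ≤ N) :
    (∑ k ∈ Finset.Icc 1 M, (k : ℝ) * a k) ^ 2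
      ≤ ∑ l ∈ Finset.Icc 1 N, ∑ m ∈ Finset.Icc 1 (N - l), (l : ℝ) * (m : ℝ) * (a l * a m) := by
  have step2 : (∑ k ∈ Finset.Icc 1 M, (k : ℝ) * a k) ^ 2
      = ∑ l ∈ Finset.Icc 1 M, ∑ m ∈ Finset.Icc 1 M, (l : ℝ) * (m : ℝ) * (a l * a m) := by
    rw [sq, Finset.sum_mul_sum]
    exact Finset.sum_congr rfl fun l _ => Finset.sum_congr rfl fun m _ => by ring
  rw [step2]
  have hnn : ∀ l m : ℕ, 1 ≤ l → 1 ≤ m → 0 ≤ (l : ℝ) * (m : ℝ) * (a l * a m) := by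
    intro l m hl hm
    have := h0 l hl; have := h0 m hm; positivity
  calc ∑ l ∈ Finset.Icc 1 M, ∑ m ∈ Finset.Icc 1 M, (l : ℝ) * (m : ℝ) * (a l * a m)
      ≤ ∑ l ∈ Finset.Icc 1 M, ∑ m ∈ Finset.Icc 1 (N - l), (l : ℝ) * (m : ℝ) * (a l * a m) := by
        refine Finset.sum_le_sum fun l hl => ?_
        simp only [Finset.mem_Icc] at hl
        refine Finset.sum_le_sum_of_subset_of_nonneg
          (Finset.Icc_subset_Icc_right (by omega)) fun m hm _ => ?_
        simp only [Finset.mem_Icc] at hm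
        exact hnn l m hl.1 hm.1
    _ ≤ ∑ l ∈ Finset.Icc 1 N, ∑ m ∈ Finset.Icc 1 (N - l), (l : ℝ) * (m : ℝ) * (a l * a m) := by
        refine Finset.sum_le_sum_of_subset_of_nonneg
          (Finset.Icc_subset_Icc_right (by omega)) fun l hl _ => ?_
        simp only [Finset.mem_Icc] at hl
        refine Finset.sum_nonneg fun m hm => ?_
        simp only [Finset.mem_Icc] at hm
        exact hnn l m hl.1 hm.1

section Main4

variable {T : ℝ} {v : ℕ → ℝ → ℝ}

lemma dnn_contOn (hderiv : ∀ k : ℕ, 1 ≤ k → ∀ t ∈ Set.Ico (0 : ℝ) T,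
      HasDerivWithinAt (v k)
        (-(k : ℝ) * v k t + (k : ℝ) / 2 * ∑ l ∈ Finset.Ico 1 k, v l t * v (k - l) t)
        (Set.Ico 0 T) t) (N : ℕ) : ContinuousOn (dnn v N) (Set.Ico 0 T) := by
  apply continuousOn_finset_sum
  intro k hk
  simp only [Finset.mem_Icc] at hk
  apply ContinuousOn.mul continuousOn_const
  apply ContinuousOn.add
  · exact ContinuousOn.mul continuousOn_const (cont_v hderiv k hk.1)
  · apply ContinuousOn.mul continuousOn_const
    apply continuousOn_finset_sum
    intro l hl
    simp only [Finset.mem_Ico] at hl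
    exact (cont_v hderiv l hl.1).mul (cont_v hderiv (k - l) (by omega))

lemma pnn_contOn (hderiv : ∀ k : ℕ, 1 ≤ k → ∀ t ∈ Set.Ico (0 : ℝ) T,
      HasDerivWithinAt (v k)
        (-(k : ℝ) * v k t + (k : ℝ) / 2 * ∑ l ∈ Finset.Ico 1 k, v l t * v (k - l) t)
        (Set.Ico 0 T) t) (N : ℕ) : ContinuousOn (pnn v N) (Set.Ico 0 T) := by
  apply continuousOn_finset_sum
  intro l hl
  simp only [Finset.mem_Icc] at hl
  apply continuousOn_finset_sum
  intro m hm
  simp only [Finset.mem_Icc] at hm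
  exact ContinuousOn.mul continuousOn_const
    ((cont_v hderiv l hl.1).mul (cont_v hderiv m hm.1))

lemma rnn_contOn (hderiv : ∀ k : ℕ, 1 ≤ k → ∀ t ∈ Set.Ico (0 : ℝ) T,
      HasDerivWithinAt (v k)
        (-(k : ℝ) * v k t + (k : ℝ) / 2 * ∑ l ∈ Finset.Ico 1 k, v l t * v (k - l) t)
        (Set.Ico 0 T) t) (N : ℕ) : ContinuousOn (rnn v N) (Set.Ico 0 T) := by
  apply continuousOn_finset_sum
  intro l hl
  simp only [Finset.mem_Icc] at hl
  exact (ContinuousOn.mul continuousOn_const (cont_v hderiv l hl.1)).mul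
    (continuousOn_const.sub (mnn_contOn hderiv (N - l)))

lemma Rnn_contOn (hderiv : ∀ k : ℕ, 1 ≤ k → ∀ t ∈ Set.Ico (0 : ℝ) T,
      HasDerivWithinAt (v k)
        (-(k : ℝ) * v k t + (k : ℝ) / 2 * ∑ l ∈ Finset.Ico 1 k, v l t * v (k - l) t)
        (Set.Ico 0 T) t) (N : ℕ) : ContinuousOn (Rnn v N) (Set.Ico 0 T) := by
  apply continuousOn_finset_sum
  intro l hl
  simp only [Finset.mem_Icc] at hl
  exact (ContinuousOn.mul continuousOn_const (cont_v hderiv l hl.1)).mul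
    (continuousOn_const.sub (mnn_contOn hderiv (N - l)))

end Main4
section Main5

variable {T : ℝ} {v : ℕ → ℝ → ℝ}

lemma markov_bound (hT : 0 < T)
    (hnn : ∀ k : ℕ, 1 ≤ k → ∀ t ∈ Set.Ico (0 : ℝ) T, 0 ≤ v k t)
    (hsum : ∀ t ∈ Set.Ico (0 : ℝ) T, HasSum (fun k : ℕ => v (k + 1) t) 1)
    (hmean : ∀ t ∈ Set.Ico (0 : ℝ) T, Summable (fun k : ℕ => ((k : ℝ) + 1) * v (k + 1) t))
    {t : ℝ} (ht : t ∈ Set.Ico (0 : ℝ) T) (N : ℕ) :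
    (N : ℝ) * (1 - mnn v N t) ≤ Ev v t - enn v N t := by
  have hsummable := (hsum t ht).summable
  have h1 : mnn v N t + ∑' i : ℕ, v (i + N + 1) t = 1 := by
    have h := hsummable.sum_add_tsum_nat_add N
    rw [(hsum t ht).tsum_eq, mnn_eq_range] at *
    exact h
  have h2 : enn v N t + ∑' i : ℕ, (((i + N : ℕ) : ℝ) + 1) * v (i + N + 1) t = Ev v t := by
    have h := (hmean t ht).sum_add_tsum_nat_add N
    rw [enn_eq_range]
    exact h
  have hs1 : Summable (fun i : ℕ => v (i + N + 1) t) :=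
    (summable_nat_add_iff N).2 hsummable
  have hs2 : Summable (fun i : ℕ => (((i + N : ℕ) : ℝ) + 1) * v (i + N + 1) t) :=
    (summable_nat_add_iff N).2 (hmean t ht)
  have h4 : 1 - mnn v N t = ∑' i : ℕ, v (i + N + 1) t := by linarith
  have h5 : Ev v t - enn v N t = ∑' i : ℕ, (((i + N : ℕ) : ℝ) + 1) * v (i + N + 1) t := by
    linarith
  rw [h4, h5, ← tsum_mul_left]
  refine Summable.tsum_le_tsum (fun i => ?_) (hs1.mul_left _) hs2
  have hv : 0 ≤ v (i + N + 1) t := hnn (i + N + 1) (by omega) t ht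
  have hcast : (N : ℝ) ≤ ((i + N : ℕ) : ℝ) + 1 := by push_cast; linarith [Nat.cast_nonneg (α := ℝ) i]
  exact mul_le_mul_of_nonneg_right hcast hv

lemma pnn_nonneg (hnn : ∀ k : ℕ, 1 ≤ k → ∀ t ∈ Set.Ico (0 : ℝ) T, 0 ≤ v k t)
    {t : ℝ} (ht : t ∈ Set.Ico (0 : ℝ) T) (N : ℕ) : 0 ≤ pnn v N t := by
  refine Finset.sum_nonneg fun l hl => Finset.sum_nonneg fun m hm => ?_
  simp only [Finset.mem_Icc] at hl hm
  have := hnn l hl.1 t ht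
  have := hnn m hm.1 t ht
  positivity

lemma Rnn_nonneg (hnn : ∀ k : ℕ, 1 ≤ k → ∀ t ∈ Set.Ico (0 : ℝ) T, 0 ≤ v k t)
    (hsum : ∀ t ∈ Set.Ico (0 : ℝ) T, HasSum (fun k : ℕ => v (k + 1) t) 1)
    {t : ℝ} (ht : t ∈ Set.Ico (0 : ℝ) T) (N : ℕ) : 0 ≤ Rnn v N t := by
  refine Finset.sum_nonneg fun l hl => ?_
  simp only [Finset.mem_Icc] at hl
  have h1 := hnn l hl.1 t ht
  have h2 := mnn_le_one hnn hsum ht (N - l)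
  have h3 : (0:ℝ) ≤ (l : ℝ) ^ 2 * v l t := by positivity
  exact mul_nonneg h3 (by linarith)

lemma Rnn_le_rnn (hnn : ∀ k : ℕ, 1 ≤ k → ∀ t ∈ Set.Ico (0 : ℝ) T, 0 ≤ v k t)
    (hsum : ∀ t ∈ Set.Ico (0 : ℝ) T, HasSum (fun k : ℕ => v (k + 1) t) 1)
    {t : ℝ} (ht : t ∈ Set.Ico (0 : ℝ) T) (N : ℕ) : Rnn v N t ≤ (N : ℝ) * rnn v N t := by
  rw [rnn, Finset.mul_sum]
  refine Finset.sum_le_sum fun l hl => ?_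
  simp only [Finset.mem_Icc] at hl
  have h1 := hnn l hl.1 t ht
  have h2 := mnn_le_one hnn hsum ht (N - l)
  have hlN : (l : ℝ) ≤ (N : ℝ) := Nat.cast_le.mpr hl.2
  have hx : 0 ≤ (l : ℝ) * v l t * (1 - mnn v (N - l) t) := by
    have : (0:ℝ) ≤ (l:ℝ) * v l t := by positivity
    exact mul_nonneg this (by linarith)
  have : (l : ℝ) ^ 2 * v l t * (1 - mnn v (N - l) t)
      = (l : ℝ) * ((l : ℝ) * v l t * (1 - mnn v (N - l) t)) := by ring
  rw [this]
  exact mul_le_mul_of_nonneg_right hlN hx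

lemma pnn_le_sq (hnn : ∀ k : ℕ, 1 ≤ k → ∀ t ∈ Set.Ico (0 : ℝ) T, 0 ≤ v k t)
    {t : ℝ} (ht : t ∈ Set.Ico (0 : ℝ) T) (N : ℕ) : pnn v N t ≤ (enn v N t) ^ 2 :=
  PN_le (fun k => v k t) N (fun k hk => hnn k hk t ht)

lemma pnn_tendsto (hnn : ∀ k : ℕ, 1 ≤ k → ∀ t ∈ Set.Ico (0 : ℝ) T, 0 ≤ v k t)
    (hmean : ∀ t ∈ Set.Ico (0 : ℝ) T, Summable (fun k : ℕ => ((k : ℝ) + 1) * v (k + 1) t))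
    {u : ℝ} (hu : u ∈ Set.Ico (0 : ℝ) T) :
    Filter.Tendsto (fun N => pnn v N u) Filter.atTop (nhds ((Ev v u) ^ 2)) := by
  have hdiv : Filter.Tendsto (fun N : ℕ => N / 2) Filter.atTop Filter.atTop :=
    Filter.tendsto_atTop_atTop_of_monotone (fun a b h => Nat.div_le_div_right h)
      (fun b => ⟨2 * b, by omega⟩)
  have hlow : Filter.Tendsto (fun N => (enn v (N / 2) u) ^ 2) Filter.atTop
      (nhds ((Ev v u) ^ 2)) := ((enn_tendsto hmean hu).comp hdiv).pow 2
  refine tendsto_of_tendsto_of_tendsto_of_le_of_le hlow tendsto_const_nhds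
    (fun N => ?_) (fun N => ?_)
  · exact PN_ge (fun k => v k u) N (N / 2) (fun k hk => hnn k hk u hu) (by omega)
  · calc pnn v N u ≤ (enn v N u) ^ 2 := pnn_le_sq hnn hu N
      _ ≤ (Ev v u) ^ 2 := pow_le_pow_left₀ (enn_nonneg hnn hu N) (enn_le_Ev hnn hmean hu N) 2

end Main5
section Main6

variable {T : ℝ} {v : ℕ → ℝ → ℝ}

lemma Ev_integral (hT : 0 < T)
    (hnn : ∀ k : ℕ, 1 ≤ k → ∀ t ∈ Set.Ico (0 : ℝ) T, 0 ≤ v k t)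
    (hderiv : ∀ k : ℕ, 1 ≤ k → ∀ t ∈ Set.Ico (0 : ℝ) T,
      HasDerivWithinAt (v k)
        (-(k : ℝ) * v k t + (k : ℝ) / 2 * ∑ l ∈ Finset.Ico 1 k, v l t * v (k - l) t)
        (Set.Ico 0 T) t)
    (hsum : ∀ t ∈ Set.Ico (0 : ℝ) T, HasSum (fun k : ℕ => v (k + 1) t) 1)
    (hmean : ∀ t ∈ Set.Ico (0 : ℝ) T, Summable (fun k : ℕ => ((k : ℝ) + 1) * v (k + 1) t))
    (hE0 : Ev v 0 = 1 / T)
    {t : ℝ} (ht : t ∈ Set.Ico (0 : ℝ) T) :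
    Ev v t = Ev v 0 + ∫ u in (0:ℝ)..t, (Ev v u) ^ 2 := by
  obtain ⟨h0t, htT⟩ := ht
  have hsubIcc : Set.Icc (0:ℝ) t ⊆ Set.Ico 0 T := fun x hx => ⟨hx.1, lt_of_le_of_lt hx.2 htT⟩
  have hsubIoc : Set.Ioc (0:ℝ) t ⊆ Set.Ico 0 T := fun x hx => ⟨le_of_lt hx.1, lt_of_le_of_lt hx.2 htT⟩
  have huIcc : Set.uIcc (0:ℝ) t = Set.Icc 0 t := Set.uIcc_of_le h0t
  have huIoc : Set.uIoc (0:ℝ) t = Set.Ioc 0 t := Set.uIoc_of_le h0t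
  set B : ℝ := (T - t)⁻¹ with hB
  have hBpos : 0 < B := by rw [hB]; exact inv_pos.mpr (by linarith)
  have hEvle : ∀ u ∈ Set.Icc (0:ℝ) t, Ev v u ≤ B := by
    intro u hu
    refine le_trans (Ev_le hT hnn hderiv hsum hmean hE0 (hsubIcc hu)) ?_
    exact inv_anti₀ (by
      have := hu.2; simp only [sub_pos]; linarith) (by linarith [hu.2])
  have hEvnn : ∀ u ∈ Set.Icc (0:ℝ) t, 0 ≤ Ev v u := fun u hu => Ev_nonneg hnn (hsubIcc hu)
  -- measurability of Ev on the interval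
  have hESM : MeasureTheory.AEStronglyMeasurable (Ev v)
      (MeasureTheory.volume.restrict (Set.Ioc (0:ℝ) t)) := by
    refine aestronglyMeasurable_of_tendsto_ae Filter.atTop
      (fun N => ((enn_contOn hderiv N).mono hsubIoc).aestronglyMeasurable measurableSet_Ioc) ?_
    filter_upwards [MeasureTheory.ae_restrict_mem measurableSet_Ioc] with u hu
    exact enn_tendsto hmean (hsubIoc hu)
  have hE2SM : MeasureTheory.AEStronglyMeasurable (fun u => (Ev v u) ^ 2)
      (MeasureTheory.volume.restrict (Set.Ioc (0:ℝ) t)) := by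
    have := hESM.mul hESM
    simpa [← sq, Pi.pow_def] using this
  have hE2int : IntervalIntegrable (fun u => (Ev v u) ^ 2) MeasureTheory.volume 0 t := by
    rw [intervalIntegrable_iff_integrableOn_Ioc_of_le h0t]
    refine MeasureTheory.Integrable.mono' (MeasureTheory.integrable_const (B ^ 2)) hE2SM ?_
    filter_upwards [MeasureTheory.ae_restrict_mem measurableSet_Ioc] with u hu
    have h1 := hEvle u (Set.Ioc_subset_Icc_self hu)
    have h2 := hEvnn u (Set.Ioc_subset_Icc_self hu)
    rw [Real.norm_eq_abs, abs_of_nonneg (by positivity)]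
    nlinarith
  -- interval integrability of the finite-sum functions
  have hInt : ∀ (f : ℕ → ℝ → ℝ), (∀ N, ContinuousOn (f N) (Set.Ico 0 T)) →
      ∀ N, IntervalIntegrable (f N) MeasureTheory.volume 0 t := by
    intro f hf N
    exact ((hf N).mono (by rw [huIcc]; exact hsubIcc)).intervalIntegrable
  have hdnnInt := hInt _ (fun N => dnn_contOn hderiv N)
  have hpnnInt := hInt _ (fun N => pnn_contOn hderiv N)
  have hRnnInt := hInt _ (fun N => Rnn_contOn hderiv N)
  have hrnnInt := hInt _ (fun N => rnn_contOn hderiv N)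
  -- FTC for enn
  have hFTC : ∀ N, ∫ u in (0:ℝ)..t, dnn v N u = enn v N t - enn v N 0 := by
    intro N
    refine intervalIntegral.integral_eq_sub_of_hasDeriv_right_of_le h0t
      ((enn_contOn hderiv N).mono hsubIcc) (fun x hx => ?_) (hdnnInt N)
    exact ((enn_hasDeriv hderiv N ⟨le_of_lt hx.1, lt_trans hx.2 htT⟩).hasDerivAt
      (Ico_mem_nhds hx.1 (lt_trans hx.2 htT))).hasDerivWithinAt
  -- FTC for mnn
  have hFTCm : ∀ N, ∫ u in (0:ℝ)..t, rnn v N u = mnn v N 0 - mnn v N t := by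
    intro N
    have h1 : ∫ u in (0:ℝ)..t, -(rnn v N u) = mnn v N t - mnn v N 0 := by
      refine intervalIntegral.integral_eq_sub_of_hasDeriv_right_of_le h0t
        ((mnn_contOn hderiv N).mono hsubIcc) (fun x hx => ?_) (hrnnInt N).neg
      exact ((mnn_hasDeriv hderiv N ⟨le_of_lt hx.1, lt_trans hx.2 htT⟩).hasDerivAt
        (Ico_mem_nhds hx.1 (lt_trans hx.2 htT))).hasDerivWithinAt
    rw [intervalIntegral.integral_neg] at h1
    linarith
  -- split dnn integral
  have hsplit : ∀ N, enn v N t - enn v N 0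
      = (∫ u in (0:ℝ)..t, pnn v N u) - ∫ u in (0:ℝ)..t, Rnn v N u := by
    intro N
    rw [← hFTC N, ← intervalIntegral.integral_sub (hpnnInt N) (hRnnInt N)]
    refine intervalIntegral.integral_congr fun u _ => ?_
    exact dnn_eq v N u
  -- DCT
  have hDCT : Filter.Tendsto (fun N => ∫ u in (0:ℝ)..t, pnn v N u) Filter.atTop
      (nhds (∫ u in (0:ℝ)..t, (Ev v u) ^ 2)) := by
    refine intervalIntegral.tendsto_integral_filter_of_dominated_convergence
      (fun _ => B ^ 2) ?_ ?_ ?_ ?_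
    · exact Filter.Eventually.of_forall fun N =>
        ((pnn_contOn hderiv N).mono (by rw [huIoc]; exact hsubIoc)).aestronglyMeasurable
          measurableSet_uIoc
    · refine Filter.Eventually.of_forall fun N => MeasureTheory.ae_of_all _ fun u hu => ?_
      rw [huIoc] at hu
      have huI := hsubIoc hu
      have h1 := pnn_nonneg hnn huI N
      have h2 := pnn_le_sq hnn huI N
      have h3 := enn_le_Ev hnn hmean huI N
      have h4 := enn_nonneg hnn huI N
      have h5 := hEvle u (Set.Ioc_subset_Icc_self hu)
      rw [Real.norm_eq_abs, abs_of_nonneg h1]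
      show pnn v N u ≤ B ^ 2
      have h6 : (enn v N u) ^ 2 ≤ (Ev v u) ^ 2 := pow_le_pow_left₀ h4 h3 2
      have h7 : (Ev v u) ^ 2 ≤ B ^ 2 := pow_le_pow_left₀ (le_trans h4 h3) h5 2
      linarith
    · exact intervalIntegrable_const
    · refine MeasureTheory.ae_of_all _ fun u hu => ?_
      rw [huIoc] at hu
      exact pnn_tendsto hnn hmean (hsubIoc hu)
  -- the R-integrals tend to 0
  have haN0 : Filter.Tendsto (fun N => ∫ u in (0:ℝ)..t, Rnn v N u) Filter.atTop (nhds 0) := by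
    have hup : ∀ N : ℕ, (∫ u in (0:ℝ)..t, Rnn v N u) ≤ Ev v t - enn v N t := by
      intro N
      have s1 : (∫ u in (0:ℝ)..t, Rnn v N u) ≤ ∫ u in (0:ℝ)..t, (N:ℝ) * rnn v N u :=
        intervalIntegral.integral_mono_on h0t (hRnnInt N) ((hrnnInt N).const_mul _)
          (fun u hu => Rnn_le_rnn hnn hsum (hsubIcc hu) N)
      rw [intervalIntegral.integral_const_mul, hFTCm N] at s1
      have s2 : mnn v N 0 ≤ 1 := mnn_le_one hnn hsum ⟨le_refl 0, hT⟩ N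
      have s3 : (N:ℝ) * (mnn v N 0 - mnn v N t) ≤ (N:ℝ) * (1 - mnn v N t) := by
        apply mul_le_mul_of_nonneg_left _ (Nat.cast_nonneg N)
        linarith
      have s4 := markov_bound hT hnn hsum hmean ⟨h0t, htT⟩ N
      linarith
    have hlo : ∀ N : ℕ, 0 ≤ ∫ u in (0:ℝ)..t, Rnn v N u := fun N =>
      intervalIntegral.integral_nonneg h0t (fun u hu => Rnn_nonneg hnn hsum (hsubIcc hu) N)
    have hupt : Filter.Tendsto (fun N => Ev v t - enn v N t) Filter.atTop (nhds 0) := by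
      have := (tendsto_const_nhds (x := Ev v t) (f := Filter.atTop (α := ℕ))).sub
        (enn_tendsto hmean ⟨h0t, htT⟩)
      simpa using this
    exact tendsto_of_tendsto_of_tendsto_of_le_of_le tendsto_const_nhds hupt hlo hup
  -- combine
  have hcomb : Filter.Tendsto
      (fun N => (∫ u in (0:ℝ)..t, pnn v N u) - (enn v N t - enn v N 0)) Filter.atTop
      (nhds ((∫ u in (0:ℝ)..t, (Ev v u) ^ 2) - (Ev v t - Ev v 0))) :=
    hDCT.sub ((enn_tendsto hmean ⟨h0t, htT⟩).sub (enn_tendsto hmean ⟨le_refl 0, hT⟩))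
  have heq : (fun N => (∫ u in (0:ℝ)..t, pnn v N u) - (enn v N t - enn v N 0))
      = fun N => ∫ u in (0:ℝ)..t, Rnn v N u := by
    funext N
    have := hsplit N
    linarith
  rw [heq] at hcomb
  have hfin := tendsto_nhds_unique hcomb haN0
  linarith

end Main6
section Main7

variable {T : ℝ} {v : ℕ → ℝ → ℝ}

lemma Ev_eq (hT : 0 < T)
    (hnn : ∀ k : ℕ, 1 ≤ k → ∀ t ∈ Set.Ico (0 : ℝ) T, 0 ≤ v k t)
    (hderiv : ∀ k : ℕ, 1 ≤ k → ∀ t ∈ Set.Ico (0 : ℝ) T,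
      HasDerivWithinAt (v k)
        (-(k : ℝ) * v k t + (k : ℝ) / 2 * ∑ l ∈ Finset.Ico 1 k, v l t * v (k - l) t)
        (Set.Ico 0 T) t)
    (hsum : ∀ t ∈ Set.Ico (0 : ℝ) T, HasSum (fun k : ℕ => v (k + 1) t) 1)
    (hmean : ∀ t ∈ Set.Ico (0 : ℝ) T, Summable (fun k : ℕ => ((k : ℝ) + 1) * v (k + 1) t))
    (hE0 : Ev v 0 = 1 / T)
    {t : ℝ} (ht : t ∈ Set.Ico (0 : ℝ) T) : Ev v t = (T - t)⁻¹ := by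
  obtain ⟨h0t, htT⟩ := ht
  set f : ℝ → ℝ := fun u => (T - u)⁻¹ with hf
  have hsubIcc : Set.Icc (0:ℝ) t ⊆ Set.Ico 0 T := fun x hx => ⟨hx.1, lt_of_le_of_lt hx.2 htT⟩
  set B : ℝ := (T - t)⁻¹ with hB
  have hTt : 0 < T - t := by linarith
  have hBpos : 0 < B := inv_pos.mpr hTt
  have hfle : ∀ u ∈ Set.Icc (0:ℝ) t, f u ≤ B := by
    intro u hu
    exact inv_anti₀ hTt (by linarith [hu.2])
  have hfpos : ∀ u ∈ Set.Icc (0:ℝ) t, 0 < f u := by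
    intro u hu
    exact inv_pos.mpr (by linarith [hu.2])
  have hEvle : ∀ u ∈ Set.Icc (0:ℝ) t, Ev v u ≤ f u := fun u hu =>
    Ev_le hT hnn hderiv hsum hmean hE0 (hsubIcc hu)
  have hEvnn : ∀ u ∈ Set.Icc (0:ℝ) t, 0 ≤ Ev v u := fun u hu => Ev_nonneg hnn (hsubIcc hu)
  -- integrability of Ev^2 on subintervals
  have hE2int : ∀ u ∈ Set.Icc (0:ℝ) t, IntervalIntegrable (fun x => (Ev v x) ^ 2)
      MeasureTheory.volume 0 u := by
    intro u hu
    have hsubIoc : Set.Ioc (0:ℝ) u ⊆ Set.Ico 0 T := fun x hx =>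
      ⟨le_of_lt hx.1, lt_of_le_of_lt (le_trans hx.2 hu.2) htT⟩
    rw [intervalIntegrable_iff_integrableOn_Ioc_of_le hu.1]
    have hESM : MeasureTheory.AEStronglyMeasurable (Ev v)
        (MeasureTheory.volume.restrict (Set.Ioc (0:ℝ) u)) := by
      refine aestronglyMeasurable_of_tendsto_ae Filter.atTop
        (fun N => ((enn_contOn hderiv N).mono hsubIoc).aestronglyMeasurable measurableSet_Ioc) ?_
      filter_upwards [MeasureTheory.ae_restrict_mem measurableSet_Ioc] with x hx
      exact enn_tendsto hmean (hsubIoc hx)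
    have hE2SM : MeasureTheory.AEStronglyMeasurable (fun x => (Ev v x) ^ 2)
        (MeasureTheory.volume.restrict (Set.Ioc (0:ℝ) u)) := by
      have := hESM.mul hESM
      simpa [← sq, Pi.pow_def] using this
    refine MeasureTheory.Integrable.mono' (MeasureTheory.integrable_const (B ^ 2)) hE2SM ?_
    filter_upwards [MeasureTheory.ae_restrict_mem measurableSet_Ioc] with x hx
    have hxI : x ∈ Set.Icc (0:ℝ) t := ⟨le_of_lt hx.1, le_trans hx.2 hu.2⟩
    have h1 := hEvnn x hxI
    have h2 : Ev v x ≤ B := le_trans (hEvle x hxI) (hfle x hxI)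
    rw [Real.norm_eq_abs, abs_of_nonneg (by positivity)]
    exact pow_le_pow_left₀ h1 h2 2
  -- FTC for f
  have hfFTC : ∀ u ∈ Set.Icc (0:ℝ) t, ∫ x in (0:ℝ)..u, (f x) ^ 2 = f u - f 0 := by
    intro u hu
    refine intervalIntegral.integral_eq_sub_of_hasDerivAt (fun x hx => ?_) ?_
    · rw [Set.uIcc_of_le hu.1] at hx
      have hne : T - x ≠ 0 := ne_of_gt (by linarith [hx.2, hu.2])
      have hd : HasDerivAt (fun y : ℝ => T - y) (-1) x := by
        simpa using (hasDerivAt_id x).const_sub T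
      have := hd.inv hne
      have heq : -(-1) / (T - x) ^ 2 = ((T - x)⁻¹) ^ 2 := by
        rw [inv_pow]
        field_simp
      rw [heq] at this
      exact this
    · apply ContinuousOn.intervalIntegrable
      rw [Set.uIcc_of_le hu.1]
      refine (ContinuousOn.inv₀ (continuousOn_const.sub continuousOn_id) fun x hx => ?_).pow 2
      exact ne_of_gt (by simp only [Pi.sub_apply, id_eq, sub_pos]; linarith [hx.2, hu.2, htT])
  -- the integral equation for h = f - Ev
  have hEq : ∀ u ∈ Set.Icc (0:ℝ) t,
      f u - Ev v u = ∫ x in (0:ℝ)..u, ((f x) ^ 2 - (Ev v x) ^ 2) := by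
    intro u hu
    have h1 := Ev_integral hT hnn hderiv hsum hmean hE0
      (show u ∈ Set.Ico (0:ℝ) T from ⟨hu.1, lt_of_le_of_lt hu.2 htT⟩)
    have h2 := hfFTC u hu
    have h3 : f 0 = Ev v 0 := by rw [hE0, hf]; norm_num
    have h4 : IntervalIntegrable (fun x => (f x) ^ 2) MeasureTheory.volume 0 u := by
      apply ContinuousOn.intervalIntegrable
      rw [Set.uIcc_of_le hu.1]
      refine (ContinuousOn.inv₀ (continuousOn_const.sub continuousOn_id) fun x hx => ?_).pow 2
      exact ne_of_gt (by simp only [Pi.sub_apply, id_eq, sub_pos]; linarith [hx.2, hu.2, htT])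
    rw [intervalIntegral.integral_sub h4 (hE2int u hu)]
    linarith
  -- Gronwall induction
  have key : ∀ n : ℕ, ∀ u ∈ Set.Icc (0:ℝ) t,
      f u - Ev v u ≤ B * (2 * B * u) ^ n / n.factorial := by
    intro n
    induction n with
    | zero =>
      intro u hu
      simp only [pow_zero, Nat.factorial_zero, Nat.cast_one, mul_one]
      have := hEvnn u hu
      have := hfle u hu
      linarith
    | succ n ih =>
      intro u hu
      rw [hEq u hu]
      have hmono : ∫ x in (0:ℝ)..u, ((f x) ^ 2 - (Ev v x) ^ 2)
          ≤ ∫ x in (0:ℝ)..u, (2 * B * (B * (2 * B * x) ^ n / n.factorial)) := by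
        refine intervalIntegral.integral_mono_on hu.1 ?_ ?_ ?_
        · refine IntervalIntegrable.sub ?_ (hE2int u hu)
          apply ContinuousOn.intervalIntegrable
          rw [Set.uIcc_of_le hu.1]
          refine (ContinuousOn.inv₀ (continuousOn_const.sub continuousOn_id) fun x hx => ?_).pow 2
          exact ne_of_gt (by simp only [Pi.sub_apply, id_eq, sub_pos]; linarith [hx.2, hu.2, htT])
        · apply ContinuousOn.intervalIntegrable
          exact (continuousOn_const.mul ((continuousOn_const.mul
            ((continuousOn_const.mul continuousOn_id).pow n)).div_const _))
        · intro x hx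
          have hxI : x ∈ Set.Icc (0:ℝ) t := ⟨hx.1, le_trans hx.2 hu.2⟩
          have h1 := hEvnn x hxI
          have h2 := hEvle x hxI
          have h3 := hfle x hxI
          have h4 := ih x hxI
          have h5 : 0 ≤ f x - Ev v x := by linarith
          have h6 : f x + Ev v x ≤ 2 * B := by linarith
          have h7 : (f x) ^ 2 - (Ev v x) ^ 2 = (f x + Ev v x) * (f x - Ev v x) := by ring
          rw [h7]
          calc (f x + Ev v x) * (f x - Ev v x) ≤ 2 * B * (f x - Ev v x) :=
                mul_le_mul_of_nonneg_right h6 h5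
            _ ≤ 2 * B * (B * (2 * B * x) ^ n / n.factorial) := by
                apply mul_le_mul_of_nonneg_left h4 (by positivity)
      refine le_trans hmono ?_
      have hcalc : ∫ x in (0:ℝ)..u, (2 * B * (B * (2 * B * x) ^ n / n.factorial))
          = B * (2 * B * u) ^ (n + 1) / (n + 1).factorial := by
        have hrw : (fun x : ℝ => 2 * B * (B * (2 * B * x) ^ n / n.factorial))
            = fun x : ℝ => (2 * B * B * (2 * B) ^ n / n.factorial) * x ^ n := by
          funext x
          rw [mul_pow]
          ring
        rw [hrw, intervalIntegral.integral_const_mul, integral_pow]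
        rw [Nat.factorial_succ, mul_pow]
        have hfac : (n.factorial : ℝ) ≠ 0 := Nat.cast_ne_zero.mpr n.factorial_ne_zero
        have hn1 : ((n:ℝ) + 1) ≠ 0 := by positivity
        push_cast
        field_simp
        ring
      rw [hcalc]
  -- conclude
  have hlim : Filter.Tendsto (fun n : ℕ => B * (2 * B * t) ^ n / n.factorial)
      Filter.atTop (nhds 0) := by
    have h1 := FloorSemiring.tendsto_pow_div_factorial_atTop (2 * B * t)
    have h2 := h1.const_mul B
    simpa [mul_div_assoc] using h2
  have hle : f t - Ev v t ≤ 0 := by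
    refine ge_of_tendsto hlim (Filter.Eventually.of_forall fun n => ?_)
    exact key n t ⟨h0t, le_refl t⟩
  have hge : 0 ≤ f t - Ev v t := by
    have := hEvle t ⟨h0t, le_refl t⟩
    linarith
  have : Ev v t = f t := by linarith
  rw [this, hf]

end Main7

theorem stmt9 (T : ℝ) (hT : 0 < T) (v : ℕ → ℝ → ℝ)
    (hnn : ∀ k : ℕ, 1 ≤ k → ∀ t ∈ Set.Ico (0 : ℝ) T, 0 ≤ v k t)
    (hderiv : ∀ k : ℕ, 1 ≤ k → ∀ t ∈ Set.Ico (0 : ℝ) T,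
      HasDerivWithinAt (v k)
        (-(k : ℝ) * v k t + (k : ℝ) / 2 * ∑ l ∈ Finset.Ico 1 k, v l t * v (k - l) t)
        (Set.Ico 0 T) t)
    (hsum : ∀ t ∈ Set.Ico (0 : ℝ) T, HasSum (fun k : ℕ => v (k + 1) t) 1)
    (hmean : ∀ t ∈ Set.Ico (0 : ℝ) T, Summable (fun k : ℕ => ((k : ℝ) + 1) * v (k + 1) t))
    (hE0 : ∑' k : ℕ, ((k : ℝ) + 1) * v (k + 1) 0 = 1 / T) :
    ∀ t ∈ Set.Ico (0 : ℝ) T, ∑' k : ℕ, ((k : ℝ) + 1) * v (k + 1) t = 1 / (T - t) := by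
  intro t ht
  have h := Ev_eq hT hnn hderiv hsum hmean hE0 ht
  rw [Ev] at h
  rw [h, one_div]
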